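/- Let X, Y ⊂ ℝ^D be nonempty compact disjoint sets, g(x) = dist_Y(x) − dist_X(x), S = {g = 0}, and s(x) = sgn(g(x))·dist_S(x). Then for every x ∈ X, s(x) ≥ d_{XY}/2, where d_{XY} = dist(X, Y). -/
import Mathlib

lemma le_infDist_aux {α : Type*} [MetricSpace α] {s : Set α} (hs : s.Nonempty)
    {x : α} {b : ℝ} (h : ∀ p ∈ s, b ≤ dist x p) : b ≤ Metric.infDist x s := by
  by_contra hlt
  obtain ⟨p, hp, hpd⟩ := (Metric.infDist_lt_iff hs).mp (lt_of_not_ge hlt)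
  exact absurd (h p hp) (not_le.mpr hpd)

/-- For nonempty compact disjoint `X, Y ⊆ ℝ^D`, the signed distance
`s(x) = sgn(g(x))·dist_S(x)` to the equidistant set `S = {dist_X = dist_Y}`
satisfies `s(x) ≥ d_{XY}/2` on `X`, with `d_{XY} = dist(X,Y)`. -/
theorem signed_dist_ge_on_X {D : ℕ} (X Y : Set (EuclideanSpace ℝ (Fin D)))
    (hXc : IsCompact X) (hYc : IsCompact Y) (hXne : X.Nonempty) (hYne : Y.Nonempty)
    (hdisj : Disjoint X Y)
    (g : EuclideanSpace ℝ (Fin D) → ℝ)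
    (hg : ∀ x, g x = Metric.infDist x Y - Metric.infDist x X)
    (S : Set (EuclideanSpace ℝ (Fin D))) (hS : S = {x | g x = 0})
    (s : EuclideanSpace ℝ (Fin D) → ℝ)
    (hs : ∀ x, s x = Real.sign (g x) * Metric.infDist x S)
    (d : ℝ) (hd : d = sInf (Set.image2 dist X Y)) :
    ∀ x ∈ X, d / 2 ≤ s x := by
  intro x hx
  have hgX : ∀ z ∈ X, 0 < g z := by
    intro z hz
    rw [hg]
    have h1 : Metric.infDist z X = 0 := Metric.infDist_zero_of_mem hz
    have h2 : 0 < Metric.infDist z Y :=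
      (hYc.isClosed.notMem_iff_infDist_pos hYne).mp
        (fun hmem => hdisj.ne_of_mem hz hmem rfl)
    linarith
  have hgY : ∀ z ∈ Y, g z < 0 := by
    intro z hz
    rw [hg]
    have h1 : Metric.infDist z Y = 0 := Metric.infDist_zero_of_mem hz
    have h2 : 0 < Metric.infDist z X :=
      (hXc.isClosed.notMem_iff_infDist_pos hXne).mp
        (fun hmem => hdisj.ne_of_mem hmem hz rfl)
    linarith
  have hgcont : Continuous g := by
    have hfe : g = fun z => Metric.infDist z Y - Metric.infDist z X := funext hg
    rw [hfe]
    exact (Metric.continuous_infDist_pt Y).sub (Metric.continuous_infDist_pt X)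
  obtain ⟨y0, hy0⟩ := hYne
  have hSne : S.Nonempty := by
    have h0 : (0 : ℝ) ∈ Set.Icc (g y0) (g x) := ⟨(hgY y0 hy0).le, (hgX x hx).le⟩
    obtain ⟨z, hz⟩ := intermediate_value_univ y0 x hgcont h0
    exact ⟨z, by rw [hS]; exact hz⟩
  -- d ≤ dist x y for all y ∈ Y
  have hbdd : BddBelow (Set.image2 dist X Y) := by
    refine ⟨0, fun r hr => ?_⟩
    obtain ⟨a, ha, b, hb, rfl⟩ := hr
    exact dist_nonneg
  have hdle : ∀ y ∈ Y, d ≤ dist x y := fun y hy =>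
    hd ▸ csInf_le hbdd (Set.mem_image2_of_mem hx hy)
  -- every point of S is at distance ≥ d/2 from x
  have hdist : ∀ p ∈ S, d / 2 ≤ dist x p := by
    intro p hp
    rw [hS] at hp
    have hpg := hg p
    have hp0 : g p = 0 := hp
    have hpeq : Metric.infDist p Y = Metric.infDist p X := by linarith
    have h1 : d - dist x p ≤ Metric.infDist p Y := by
      refine le_infDist_aux ⟨y0, hy0⟩ fun y hy => ?_
      have := dist_triangle x p y
      have := hdle y hy
      linarith [dist_comm p y ▸ (le_refl (dist p y))]
    have h2 : Metric.infDist p X ≤ dist p x := Metric.infDist_le_dist_of_mem hx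
    have := dist_comm x p
    linarith
  have hxS : d / 2 ≤ Metric.infDist x S := le_infDist_aux hSne hdist
  rw [hs, Real.sign_of_pos (hgX x hx), one_mul]
  exact hxS
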